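/- Let k ≥ 1 and let C be a self-dual four-negacirculant Z_{2k}-code of length 4n with generator matrix (I_{2n} | [[A, B], [−B^T, A^T]]), where A and B are n×n negacirculant matrices over Z_{2k} with first rows r_A and r_B. If wt_E(r_A) + wt_E(r_B) ≡ −1 (mod 4k), then C is a Type II Z_{2k}-code. -/
import Mathlib


open Finset

/-- Inner product of two vectors over `ZMod m`. -/
def dotP {m : ℕ} {ι : Type} [Fintype ι] (x y : ι → ZMod m) : ZMod m :=
  ∑ i, x i * y i

/-- A `ZMod m`-code (submodule) is self-dual if it equals its dual code. -/
def IsSelfDual {m : ℕ} {ι : Type} [Fintype ι]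
    (C : Submodule (ZMod m) (ι → ZMod m)) : Prop :=
  ∀ x, x ∈ C ↔ ∀ y ∈ C, dotP x y = 0

/-- The code of length `2n` with generator matrix `(I | M)`: the span of the
vectors `(e_i, M i)`. -/
def genCode (m : ℕ) {ι : Type} [Fintype ι] [DecidableEq ι] (M : ι → ι → ZMod m) :
    Submodule (ZMod m) (ι ⊕ ι → ZMod m) :=
  Submodule.span (ZMod m)
    {v | ∃ i : ι, v = Sum.elim (fun j => if j = i then 1 else 0) (M i)}

/-- The map `ρ : ZMod m → ℤ` sending the representative `i ∈ {0,…,m−1}` to `i`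
if `i ≤ m/2` and to `i − m` otherwise (for `m = 2k` this is the map of the paper). -/
def rho (m : ℕ) (a : ZMod m) : ℤ :=
  if a.val ≤ m / 2 then (a.val : ℤ) else (a.val : ℤ) - (m : ℤ)

/-- Euclidean weight of a vector over `ZMod m`. -/
def wtE {m : ℕ} {ι : Type} [Fintype ι] (v : ι → ZMod m) : ℤ :=
  ∑ i, (rho m (v i)) ^ 2

/-- A Type II `ZMod (2k)`-code: self-dual and all Euclidean weights divisible by `4k`. -/
def IsTypeII (k : ℕ) {ι : Type} [Fintype ι]
    (C : Submodule (ZMod (2 * k)) (ι → ZMod (2 * k))) : Prop :=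
  IsSelfDual C ∧ ∀ c ∈ C, (4 * (k : ℤ)) ∣ wtE c

/-- Equivalence of `ZMod m`-codes: a permutation of coordinates together with
sign changes. -/
def CodeEquiv {m n : ℕ} (C C' : Submodule (ZMod m) (Fin n → ZMod m)) : Prop :=
  ∃ (σ : Equiv.Perm (Fin n)) (ε : Fin n → ZMod m),
    (∀ i, ε i = 1 ∨ ε i = -1) ∧
    (C' : Set (Fin n → ZMod m)) =
      (fun c : Fin n → ZMod m => fun i => ε i * c (σ i)) '' (C : Set (Fin n → ZMod m))

/-- The binary part of a `ZMod m`-code. -/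
def binaryPart {m n : ℕ} (C : Submodule (ZMod m) (Fin n → ZMod m)) :
    Set (Fin n → ZMod 2) :=
  {b | ∃ c ∈ C, ∀ i, b i = ((rho m (c i) : ℤ) : ZMod 2)}

/-- Hamming weight of a binary vector. -/
def wtH {n : ℕ} (b : Fin n → ZMod 2) : ℕ :=
  (Finset.univ.filter fun i => b i ≠ 0).card

/-- The `n × n` negacirculant matrix with first row `r`. -/
def negacirc {m n : ℕ} (r : Fin n → ZMod m) : Fin n → Fin n → ZMod m :=
  fun i j =>
    if h : (i : ℕ) ≤ (j : ℕ) then r ⟨(j : ℕ) - (i : ℕ), by have hj := j.isLt; omega⟩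
    else -r ⟨n + (j : ℕ) - (i : ℕ), by have hi := i.isLt; have hj := j.isLt; omega⟩

/-- The block matrix `[[A, B], [−Bᵀ, Aᵀ]]`. -/
def fourBlock {m n : ℕ} (A B : Fin n → Fin n → ZMod m) :
    (Fin n ⊕ Fin n) → (Fin n ⊕ Fin n) → ZMod m
  | Sum.inl i, Sum.inl j => A i j
  | Sum.inl i, Sum.inr j => B i j
  | Sum.inr i, Sum.inl j => -B j i
  | Sum.inr i, Sum.inr j => A j i

/-- The Construction A lattice `A_m(C) = (1/√m)(ρ(C) + m ℤ^n)` as a subset of `ℝ^n`. -/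
noncomputable def constrA (m : ℕ) {n : ℕ} (C : Submodule (ZMod m) (Fin n → ZMod m)) :
    Set (Fin n → ℝ) :=
  {x | ∃ c ∈ C, ∃ z : Fin n → ℤ,
    x = fun i => (1 / Real.sqrt m) * ((rho m (c i) : ℝ) + (m : ℝ) * (z i : ℝ))}



def shiftF {n : ℕ} (i : Fin n) : Fin n → Fin n := fun j =>
  if h : i.val ≤ j.val then ⟨j.val - i.val, by have := j.isLt; omega⟩
  else ⟨n + j.val - i.val, by have := i.isLt; have := j.isLt; omega⟩

def shiftG {n : ℕ} (i : Fin n) : Fin n → Fin n := fun j =>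
  if h : j.val ≤ i.val then ⟨i.val - j.val, by have := i.isLt; omega⟩
  else ⟨n + i.val - j.val, by have := i.isLt; have := j.isLt; omega⟩

lemma shiftF_bij {n : ℕ} (i : Fin n) : Function.Bijective (shiftF i) := by
  rw [← Finite.injective_iff_bijective]
  intro a b hab
  have h1 := a.isLt; have h2 := b.isLt; have h3 := i.isLt
  apply Fin.ext
  unfold shiftF at hab
  split_ifs at hab <;> simp only [Fin.mk.injEq] at hab <;> omega

lemma shiftG_bij {n : ℕ} (i : Fin n) : Function.Bijective (shiftG i) := by
  rw [← Finite.injective_iff_bijective]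
  intro a b hab
  have h1 := a.isLt; have h2 := b.isLt; have h3 := i.isLt
  apply Fin.ext
  unfold shiftG at hab
  split_ifs at hab <;> simp only [Fin.mk.injEq] at hab <;> omega

lemma negacirc_row {m n : ℕ} (r : Fin n → ZMod m) (i j : Fin n) :
    negacirc r i j = r (shiftF i j) ∨ negacirc r i j = - r (shiftF i j) := by
  unfold negacirc shiftF
  split_ifs with h
  · left; rfl
  · right; rfl

lemma negacirc_col {m n : ℕ} (r : Fin n → ZMod m) (i j : Fin n) :
    negacirc r j i = r (shiftG i j) ∨ negacirc r j i = - r (shiftG i j) := by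
  unfold negacirc shiftG
  split_ifs with h
  · left; rfl
  · right; rfl


section Stmt8Aux

variable {k : ℕ}

lemma sq_congr {a b : ℤ} (h : (2*(k:ℤ)) ∣ a - b) : (4*(k:ℤ)) ∣ a^2 - b^2 := by
  obtain ⟨s, hs⟩ := h
  have ha : a = b + 2*k*s := by linarith
  subst ha
  exact ⟨s*b + k*s^2, by ring⟩

variable (hk : 1 ≤ k)
include hk

lemma rho_cast (a : ZMod (2*k)) : ((rho (2*k) a : ℤ) : ZMod (2*k)) = a := by
  haveI : NeZero (2*k) := ⟨by omega⟩
  unfold rho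
  split <;> push_cast <;> simp [ZMod.natCast_val]
  have h0 : ((2*k : ℕ) : ZMod (2*k)) = 0 := ZMod.natCast_self _
  push_cast at h0
  exact h0

lemma dvd_lift (x : ℤ) (a : ZMod (2*k)) (h : (x : ZMod (2*k)) = a) :
    (2*(k:ℤ)) ∣ x - rho (2*k) a := by
  haveI : NeZero (2*k) := ⟨by omega⟩
  have h2 : (((x - rho (2*k) a : ℤ)) : ZMod (2*k)) = 0 := by
    push_cast
    rw [h, rho_cast hk]
    ring
  have h3 := (ZMod.intCast_zmod_eq_zero_iff_dvd _ _).mp h2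
  have he : ((2*k : ℕ) : ℤ) = 2*(k:ℤ) := by push_cast; ring
  rwa [he] at h3

lemma rho_sq_congr (x : ℤ) (a : ZMod (2*k)) (h : (x : ZMod (2*k)) = a) :
    (4*(k:ℤ)) ∣ rho (2*k) a ^ 2 - x ^ 2 := by
  obtain ⟨s, hs⟩ := dvd_lift hk x a h
  exact sq_congr ⟨-s, by linarith⟩

lemma wtE_congr {ι : Type} [Fintype ι] (v : ι → ZMod (2*k)) (x : ι → ℤ)
    (h : ∀ i, ((x i : ℤ) : ZMod (2*k)) = v i) :
    (4*(k:ℤ)) ∣ wtE v - ∑ i, (x i)^2 := by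
  rw [wtE, ← Finset.sum_sub_distrib]
  exact Finset.dvd_sum fun i _ => rho_sq_congr hk (x i) (v i) (h i)

lemma rho_zero : rho (2*k) (0 : ZMod (2*k)) = 0 := by
  haveI : NeZero (2*k) := ⟨by omega⟩
  simp [rho]

lemma rho_one : rho (2*k) (1 : ZMod (2*k)) = 1 := by
  haveI : Fact (1 < 2*k) := ⟨by omega⟩
  have h1 : (1 : ZMod (2*k)).val = 1 := ZMod.val_one _
  rw [rho, h1]
  simp only [if_pos (by omega : 1 ≤ 2*k/2), Nat.cast_one]

include hk

lemma negasum {n : ℕ} (r : Fin n → ZMod (2*k)) (g : Fin n → Fin n)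
    (hg : Function.Bijective g) (v : Fin n → ZMod (2*k))
    (hv : ∀ j, v j = r (g j) ∨ v j = - r (g j)) :
    (4*(k:ℤ)) ∣ (∑ j, rho (2*k) (v j)^2) - wtE r := by
  have h1 : (4*(k:ℤ)) ∣ (∑ j, rho (2*k) (v j)^2) - ∑ j, rho (2*k) (r (g j))^2 := by
    rw [← Finset.sum_sub_distrib]
    refine Finset.dvd_sum fun j _ => ?_
    rcases hv j with h | h
    · rw [h]; simp
    · rw [h]
      have h2 := rho_sq_congr hk (-(rho (2*k) (r (g j)))) (-(r (g j)))
        (by push_cast [rho_cast hk]; ring)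
      simpa using h2
  have h2 : ∑ j, rho (2*k) (r (g j))^2 = wtE r := by
    rw [wtE]
    exact Fintype.sum_bijective g hg _ _ (fun j => rfl)
  rw [← h2]; exact h1

lemma wtE_add_mem {ι : Type} [Fintype ι] (x y : ι → ZMod (2*k))
    (hx : (4*(k:ℤ)) ∣ wtE x) (hy : (4*(k:ℤ)) ∣ wtE y) (hd : dotP x y = 0) :
    (4*(k:ℤ)) ∣ wtE (x + y) := by
  haveI : NeZero (2*k) := ⟨by omega⟩
  have hl := wtE_congr hk (x + y) (fun i => rho (2*k) (x i) + rho (2*k) (y i))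
    (fun i => by push_cast [rho_cast hk]; rfl)
  have hT : (2*(k:ℤ)) ∣ ∑ i, rho (2*k) (x i) * rho (2*k) (y i) := by
    have hc : ((∑ i, rho (2*k) (x i) * rho (2*k) (y i) : ℤ) : ZMod (2*k)) = 0 := by
      push_cast [rho_cast hk]
      exact hd
    have h3 := (ZMod.intCast_zmod_eq_zero_iff_dvd _ _).mp hc
    have he : ((2*k : ℕ) : ℤ) = 2*(k:ℤ) := by push_cast; ring
    rwa [he] at h3
  have hexp : ∑ i, (rho (2*k) (x i) + rho (2*k) (y i))^2
      = wtE x + wtE y + 2 * ∑ i, rho (2*k) (x i) * rho (2*k) (y i) := by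
    rw [wtE, wtE, Finset.mul_sum, ← Finset.sum_add_distrib, ← Finset.sum_add_distrib]
    exact Finset.sum_congr rfl fun i _ => by ring
  obtain ⟨a, ha⟩ := hl
  obtain ⟨b, hb⟩ := hx
  obtain ⟨c, hc⟩ := hy
  obtain ⟨d, hd2⟩ := hT
  refine ⟨a + b + c + d, ?_⟩
  rw [hexp] at ha
  linarith

lemma wtE_smul_mem {ι : Type} [Fintype ι] (r : ZMod (2*k)) (c : ι → ZMod (2*k))
    (hc : (4*(k:ℤ)) ∣ wtE c) : (4*(k:ℤ)) ∣ wtE (r • c) := by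
  have hl := wtE_congr hk (r • c) (fun i => rho (2*k) r * rho (2*k) (c i))
    (fun i => by push_cast [rho_cast hk]; rfl)
  have hexp : ∑ i, (rho (2*k) r * rho (2*k) (c i))^2 = rho (2*k) r ^ 2 * wtE c := by
    rw [wtE, Finset.mul_sum]
    exact Finset.sum_congr rfl fun i _ => by ring
  obtain ⟨a, ha⟩ := hl
  obtain ⟨b, hb⟩ := hc
  refine ⟨a + rho (2*k) r ^ 2 * b, ?_⟩
  rw [hexp, hb] at ha
  linarith [ha]

end Stmt8Aux

/-- a self-dual four-negacirculant `ZMod (2k)`-code with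
`wt_E(r_A) + wt_E(r_B) ≡ −1 (mod 4k)` is Type II. -/
theorem stmt8 (k n : ℕ) (hk : 1 ≤ k) (rA rB : Fin n → ZMod (2 * k))
    (hSD : IsSelfDual (genCode (2 * k) (fourBlock (negacirc rA) (negacirc rB))))
    (hwt : (4 * (k : ℤ)) ∣ (wtE rA + wtE rB + 1)) :
    IsTypeII k (genCode (2 * k) (fourBlock (negacirc rA) (negacirc rB))) := by
  haveI : NeZero (2*k) := ⟨by omega⟩
  set M := fourBlock (negacirc rA) (negacirc rB) with hM
  set C := genCode (2 * k) M with hC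
  refine ⟨hSD, ?_⟩
  let S : Submodule (ZMod (2*k)) ((Fin n ⊕ Fin n) ⊕ (Fin n ⊕ Fin n) → ZMod (2*k)) :=
    { carrier := {c | c ∈ C ∧ (4*(k:ℤ)) ∣ wtE c}
      add_mem' := by
        rintro a b ⟨haC, haW⟩ ⟨hbC, hbW⟩
        exact ⟨C.add_mem haC hbC, wtE_add_mem hk a b haW hbW ((hSD a).mp haC b hbC)⟩
      zero_mem' := by
        refine ⟨C.zero_mem, ?_⟩
        have h0 : wtE (0 : (Fin n ⊕ Fin n) ⊕ (Fin n ⊕ Fin n) → ZMod (2*k)) = 0 := by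
          rw [wtE]
          refine Finset.sum_eq_zero fun i _ => ?_
          rw [Pi.zero_apply, rho_zero hk]
          ring
        rw [h0]
        exact dvd_zero _
      smul_mem' := by
        rintro r c ⟨hcC, hcW⟩
        exact ⟨C.smul_mem r hcC, wtE_smul_mem hk r c hcW⟩ }
  have hle : C ≤ S := by
    rw [hC, genCode]
    refine Submodule.span_le.mpr ?_
    rintro v ⟨i, rfl⟩
    refine ⟨Submodule.subset_span ⟨i, rfl⟩, ?_⟩
    have hMi : (4*(k:ℤ)) ∣ (∑ a : Fin n ⊕ Fin n, rho (2*k) (M i a)^2) - (wtE rA + wtE rB) := by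
      rw [Fintype.sum_sum_type]
      cases i with
      | inl a =>
        have hA := negasum hk rA (shiftF a) (shiftF_bij a)
          (fun j => negacirc rA a j) (negacirc_row rA a)
        have hB := negasum hk rB (shiftF a) (shiftF_bij a)
          (fun j => negacirc rB a j) (negacirc_row rB a)
        obtain ⟨p, hp⟩ := hA
        obtain ⟨q, hq⟩ := hB
        refine ⟨p + q, ?_⟩
        simp only [hM, fourBlock] at *
        linarith
      | inr a =>
        have hA := negasum hk rA (shiftG a) (shiftG_bij a)
          (fun j => negacirc rA j a) (negacirc_col rA a)
        have hB := negasum hk rB (shiftG a) (shiftG_bij a)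
          (fun j => -(negacirc rB j a))
          (fun j => by
            rcases negacirc_col rB a j with h | h
            · right; show -(negacirc rB j a) = _; rw [h]
            · left; show -(negacirc rB j a) = _; rw [h, neg_neg])
        obtain ⟨p, hp⟩ := hA
        obtain ⟨q, hq⟩ := hB
        refine ⟨q + p, ?_⟩
        simp only [hM, fourBlock] at *
        linarith
    have hleft : (∑ a : Fin n ⊕ Fin n,
        rho (2*k) (if a = i then (1 : ZMod (2*k)) else 0)^2) = 1 := by
      have hterm : ∀ a : Fin n ⊕ Fin n,
          rho (2*k) (if a = i then (1 : ZMod (2*k)) else 0)^2 = if a = i then 1 else 0 := by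
        intro a
        split <;> simp [rho_one hk, rho_zero hk]
      rw [Finset.sum_congr rfl (fun a _ => hterm a)]
      simp
    have hsplit : wtE (Sum.elim (fun j => if j = i then (1 : ZMod (2*k)) else 0) (M i))
        = 1 + ∑ a : Fin n ⊕ Fin n, rho (2*k) (M i a)^2 := by
      rw [wtE, Fintype.sum_sum_type]
      simp only [Sum.elim_inl, Sum.elim_inr]
      rw [hleft]
    obtain ⟨p, hp⟩ := hMi
    obtain ⟨q, hq⟩ := hwt
    refine ⟨p + q, ?_⟩
    rw [hsplit]
    linarith
  exact fun c hc => (hle hc).2
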